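/- There exists a 1-factorization (F₁, F₂, F₃, F₄) of the 4-cube graph Q₄ that is rainbow on every 4-cycle, together with a 2-factor of Q₄ consisting of two vertex-disjoint 8-cycles, such that traversing each of the two 8-cycles the successive edges lie in the 1-factors in the cyclic order (1,2,3,4,1,2,3,4). -/

import Mathlib

/-- The 4-cube graph on vertex set `Fin 4 → ZMod 2`: two vertices are adjacent
iff they differ in exactly one coordinate. -/
def Q4 : SimpleGraph (Fin 4 → ZMod 2) where
  Adj x y := (Finset.univ.filter fun i => x i ≠ y i).card = 1
  symm := by
    constructor
    intro x y h
    simpa [ne_comm] using h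
  loopless := by constructor; intro x; simp

variable {V : Type*}

/-- `M` is (the edge set of) a perfect matching of `G`. -/
def IsPM (G : SimpleGraph V) (M : Set (Sym2 V)) : Prop :=
  M ⊆ G.edgeSet ∧ ∀ v : V, ∃! e, e ∈ M ∧ v ∈ e

/-- `F` is a 1-factorization of `G` into four perfect matchings:
each `F i` is a perfect matching and every edge of `G` lies in exactly one `F i`. -/
def IsOneFactorization (G : SimpleGraph V) (F : Fin 4 → Set (Sym2 V)) : Prop :=
  (∀ i, IsPM G (F i)) ∧ ∀ e ∈ G.edgeSet, ∃! i, e ∈ F i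

/-- `a, b, c, d` are the successive vertices of a 4-cycle of `G`. -/
def IsC4 (G : SimpleGraph V) (a b c d : V) : Prop :=
  a ≠ b ∧ a ≠ c ∧ a ≠ d ∧ b ≠ c ∧ b ≠ d ∧ c ≠ d ∧
  G.Adj a b ∧ G.Adj b c ∧ G.Adj c d ∧ G.Adj d a

/-- The color (1-factor index) at position `k` of the cyclic pattern `(1,2,3,4,1,2,3,4)`
along an 8-cycle indexed by `ZMod 8`. -/
def cyc8 (k : ZMod 8) : Fin 4 := ⟨k.val % 4, Nat.mod_lt _ (by norm_num)⟩

/-! ### Auxiliary construction -/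

abbrev VV := Fin 4 → ZMod 2

instance : DecidableRel Q4.Adj :=
  fun x y => decidable_of_iff ((Finset.univ.filter fun i => x i ≠ y i).card = 1) Iff.rfl

/-- F4 addition (xor on labels `0,1,a=2,a+1=3`). -/
def f4x : Fin 4 → Fin 4 → Fin 4 :=
  ![![0,1,2,3],![1,0,3,2],![2,3,0,1],![3,2,1,0]]

/-- Multiplication by the generator `a` of F4. -/
def f4mulA : Fin 4 → Fin 4 := ![0, 2, 3, 1]

/-- The color of the edge leaving `x` in direction `i`: `a·i + Σ_{k : x_k = 1} (i + k)` in F4. -/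
def col (x : VV) (i : Fin 4) : Fin 4 :=
  f4x (f4mulA i)
    (f4x (if x 0 = 1 then f4x i 0 else 0)
      (f4x (if x 1 = 1 then f4x i 1 else 0)
        (f4x (if x 2 = 1 then f4x i 2 else 0)
          (if x 3 = 1 then f4x i 3 else 0))))

/-- A coordinate where `x` and `y` differ (or `3`). -/
def dIdx (x y : VV) : Fin 4 :=
  if x 0 ≠ y 0 then 0 else if x 1 ≠ y 1 then 1 else if x 2 ≠ y 2 then 2 else 3

/-- Symmetric color function on pairs of vertices. -/
def col2 (x y : VV) : Fin 4 :=
  col (fun j => if x j = y j then x j else 0) (dIdx x y)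

/-- Decoder from bitmasks to vertices of `Q4`. -/
def toV (m : Fin 16) : VV :=
  ![if m.val % 2 = 1 then 1 else 0, if m.val / 2 % 2 = 1 then 1 else 0,
    if m.val / 4 % 2 = 1 then 1 else 0, if m.val / 8 % 2 = 1 then 1 else 0]

lemma toV_bij : Function.Bijective toV := by
  rw [Fintype.bijective_iff_injective_and_card]
  constructor
  · decide
  · simp [Fintype.card_fun]

lemma toV_surj (x : VV) : ∃ m : Fin 16, toV m = x := toV_bij.surjective x

lemma col2_symm (x y : VV) : col2 x y = col2 y x := by
  obtain ⟨m, rfl⟩ := toV_surj x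
  obtain ⟨m', rfl⟩ := toV_surj y
  revert m m'
  decide

/-- The edge-coloring of `Q4`. -/
def colE : Sym2 VV → Fin 4 := Sym2.lift ⟨col2, col2_symm⟩

/-- The four 1-factors. -/
def FF : Fin 4 → Set (Sym2 VV) := fun i => {e | e ∈ Q4.edgeSet ∧ colE e = i}

/-- The neighbor of `v` along the edge of color `c`. -/
def nb (v : VV) (c : Fin 4) : VV := fun j => if col v j = c then v j + 1 else v j

lemma nb_spec (v : VV) (c : Fin 4) : Q4.Adj v (nb v c) ∧ col2 v (nb v c) = c := by
  obtain ⟨m, rfl⟩ := toV_surj v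
  revert m c
  decide

lemma nb_unique (v u : VV) (c : Fin 4) (h : Q4.Adj v u) (h2 : col2 v u = c) : u = nb v c := by
  obtain ⟨m, rfl⟩ := toV_surj v
  obtain ⟨m', rfl⟩ := toV_surj u
  revert h h2
  revert m m' c
  decide

/-- Flip coordinate `i`. -/
def flipd (x : VV) (i : Fin 4) : VV := fun j => if j = i then x j + 1 else x j

lemma adj_flip (x y : VV) (h : Q4.Adj x y) : ∃ i : Fin 4, y = flipd x i := by
  obtain ⟨m, rfl⟩ := toV_surj x
  obtain ⟨m', rfl⟩ := toV_surj y
  revert h; revert m m'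
  decide

lemma rainbow_aux (a : VV) (i j k : Fin 4)
    (h1 : a ≠ flipd (flipd a i) j)
    (h2 : flipd a i ≠ flipd (flipd (flipd a i) j) k)
    (h3 : Q4.Adj (flipd (flipd (flipd a i) j) k) a) :
    col2 a (flipd a i) ≠ col2 (flipd a i) (flipd (flipd a i) j) ∧
    col2 a (flipd a i) ≠ col2 (flipd (flipd a i) j) (flipd (flipd (flipd a i) j) k) ∧
    col2 a (flipd a i) ≠ col2 (flipd (flipd (flipd a i) j) k) a ∧
    col2 (flipd a i) (flipd (flipd a i) j) ≠
      col2 (flipd (flipd a i) j) (flipd (flipd (flipd a i) j) k) ∧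
    col2 (flipd a i) (flipd (flipd a i) j) ≠ col2 (flipd (flipd (flipd a i) j) k) a ∧
    col2 (flipd (flipd a i) j) (flipd (flipd (flipd a i) j) k) ≠
      col2 (flipd (flipd (flipd a i) j) k) a := by
  obtain ⟨m, rfl⟩ := toV_surj a
  revert h1 h2 h3
  revert m i j k
  decide

/-- Bitmasks of the first 8-cycle. -/
def vmask : Fin 8 → Fin 16 := ![1, 0, 8, 12, 14, 15, 7, 3]
/-- Bitmasks of the second 8-cycle. -/
def wmask : Fin 8 → Fin 16 := ![2, 6, 4, 5, 13, 9, 11, 10]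

def vc : ZMod 8 → VV := fun k => toV (vmask ⟨k.val, k.val_lt⟩)
def wc : ZMod 8 → VV := fun k => toV (wmask ⟨k.val, k.val_lt⟩)

lemma vc_adj : ∀ k : ZMod 8, Q4.Adj (vc k) (vc (k + 1)) := by decide
lemma wc_adj : ∀ k : ZMod 8, Q4.Adj (wc k) (wc (k + 1)) := by decide
lemma vc_col : ∀ k : ZMod 8, col2 (vc k) (vc (k + 1)) = cyc8 k := by decide
lemma wc_col : ∀ k : ZMod 8, col2 (wc k) (wc (k + 1)) = cyc8 k := by decide

lemma vw_inj : Function.Injective (Sum.elim vc wc : ZMod 8 ⊕ ZMod 8 → VV) := by decide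

lemma vw_bij : Function.Bijective (Sum.elim vc wc : ZMod 8 ⊕ ZMod 8 → VV) := by
  rw [Fintype.bijective_iff_injective_and_card]
  exact ⟨vw_inj, by simp [Fintype.card_fun]⟩

/-- there is a 1-factorization `(F 0, F 1, F 2, F 3)` of `Q4`, rainbow on
every 4-cycle, together with a 2-factor of `Q4` consisting of two vertex-disjoint
8-cycles `v` and `w` (indexed cyclically by `ZMod 8`, together visiting the 16 vertices
bijectively, all edges being edges of `Q4`), such that the successive edges of each
8-cycle lie in the 1-factors in the cyclic order `(1,2,3,4,1,2,3,4)`. -/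
theorem stmt4 : ∃ F : Fin 4 → Set (Sym2 (Fin 4 → ZMod 2)),
    IsOneFactorization Q4 F ∧
    (∀ a b c d : Fin 4 → ZMod 2, IsC4 Q4 a b c d →
      ∃ g : Fin 4 → Fin 4, Function.Bijective g ∧
        s(a, b) ∈ F (g 0) ∧ s(b, c) ∈ F (g 1) ∧ s(c, d) ∈ F (g 2) ∧ s(d, a) ∈ F (g 3)) ∧
    ∃ v w : ZMod 8 → (Fin 4 → ZMod 2),
      Function.Bijective (Sum.elim v w : ZMod 8 ⊕ ZMod 8 → (Fin 4 → ZMod 2)) ∧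
      (∀ k : ZMod 8, Q4.Adj (v k) (v (k + 1))) ∧
      (∀ k : ZMod 8, Q4.Adj (w k) (w (k + 1))) ∧
      (∀ k : ZMod 8, s(v k, v (k + 1)) ∈ F (cyc8 k)) ∧
      (∀ k : ZMod 8, s(w k, w (k + 1)) ∈ F (cyc8 k)) := by
  refine ⟨FF, ⟨?_, ?_⟩, ?_, vc, wc, vw_bij, vc_adj, wc_adj,
    fun k => ⟨Q4.mem_edgeSet.2 (vc_adj k), vc_col k⟩,
    fun k => ⟨Q4.mem_edgeSet.2 (wc_adj k), wc_col k⟩⟩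
  · -- each FF i is a perfect matching
    intro i
    refine ⟨fun e he => he.1, fun v => ?_⟩
    refine ⟨s(v, nb v i), ⟨⟨Q4.mem_edgeSet.2 (nb_spec v i).1, (nb_spec v i).2⟩,
      Sym2.mem_mk_left _ _⟩, ?_⟩
    rintro e ⟨⟨heE, heC⟩, hv⟩
    obtain ⟨u, rfl⟩ := (Sym2.mem_iff_exists).1 hv
    rw [nb_unique v u i (Q4.mem_edgeSet.1 heE) heC]
  · -- every edge is in exactly one FF i
    intro e he
    exact ⟨colE e, ⟨he, rfl⟩, fun j hj => hj.2.symm⟩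
  · -- rainbow on 4-cycles
    rintro a b c d ⟨h1, h2, h3, h4, h5, h6, Aab, Abc, Acd, Ada⟩
    obtain ⟨i, rfl⟩ := adj_flip a b Aab
    obtain ⟨j, rfl⟩ := adj_flip _ c Abc
    obtain ⟨k, rfl⟩ := adj_flip _ d Acd
    obtain ⟨d1, d2, d3, d4, d5, d6⟩ := rainbow_aux a i j k h2 h5 Ada
    set b := flipd a i with hb
    set c := flipd b j with hc
    set d := flipd c k with hd
    refine ⟨fun t => if t = 0 then col2 a b else if t = 1 then col2 b c
      else if t = 2 then col2 c d else col2 d a, ?_, ⟨Q4.mem_edgeSet.2 Aab, rfl⟩,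
      ⟨Q4.mem_edgeSet.2 Abc, rfl⟩, ⟨Q4.mem_edgeSet.2 Acd, rfl⟩, ⟨Q4.mem_edgeSet.2 Ada, rfl⟩⟩
    rw [Fintype.bijective_iff_injective_and_card]
    refine ⟨?_, rfl⟩
    intro s t hst
    fin_cases s <;> fin_cases t <;> simp_all
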